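/- arXiv:0811.4641 — 7 statements merged into one kernel-verified Lean document; each statement's English description precedes it below -/
import Mathlib

section
/- The polynomial identity (1-z)·(1+(2-8i)z+z^2)^2 = (1+(2i-1)z)^4 - z·(2+i-iz)^4 holds in the polynomial ring C[z]. -/
open Complex

theorem triple_two_add_i_identity (z : ℂ) :
    (1 - z) * (1 + (2 - 8 * I) * z + z ^ 2) ^ 2 =
      (1 + (2 * I - 1) * z) ^ 4 - z * (2 + I - I * z) ^ 4 := by
  linear_combination (I ^ 2 * (z - 4 * z ^ 2 + 6 * z ^ 3 - 20 * z ^ 4 + z ^ 5) +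
    I * (8 * z - 24 * z ^ 2 - 8 * z ^ 3 + 24 * z ^ 4) +
    (23 * z - 4 * z ^ 2 + 2 * z ^ 3 - 4 * z ^ 4 - z ^ 5)) * I_sq
end

section
/- If polynomials P, Q, R in C[z] satisfy (1-z)R(z)^2 = Q(z)^4 - z·P(z)^4, and (x,y) is a point on the curve y^2 = x^3 - x with x ≠ 0 and P(x^{-2}) ≠ 0, then the point (X, Y) = (x·Q(x^{-2})^2 / P(x^{-2})^2, y·Q(x^{-2})·R(x^{-2}) / P(x^{-2})^3) also lies on the curve, i.e. Y^2 = X^3 - X. -/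
theorem pqr_gives_E1_endomorphism (P Q R : Polynomial ℂ)
    (hPQR : ∀ z : ℂ, (1 - z) * (R.eval z) ^ 2 = (Q.eval z) ^ 4 - z * (P.eval z) ^ 4)
    (x y : ℂ) (hx : x ≠ 0) (hP : P.eval (x ^ (-2 : ℤ)) ≠ 0)
    (h : y ^ 2 = x ^ 3 - x) :
    (y * Q.eval (x ^ (-2 : ℤ)) * R.eval (x ^ (-2 : ℤ)) / (P.eval (x ^ (-2 : ℤ))) ^ 3) ^ 2 =
      (x * (Q.eval (x ^ (-2 : ℤ))) ^ 2 / (P.eval (x ^ (-2 : ℤ))) ^ 2) ^ 3 -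
        x * (Q.eval (x ^ (-2 : ℤ))) ^ 2 / (P.eval (x ^ (-2 : ℤ))) ^ 2 := by
  have hz : x ^ (-2 : ℤ) = (x ^ 2)⁻¹ := by
    rw [zpow_neg, zpow_two]; ring_nf
  rw [hz] at hP ⊢
  have key := hPQR ((x ^ 2)⁻¹)
  -- key rewritten
  have hx2 : (x ^ 2 : ℂ) ≠ 0 := pow_ne_zero _ hx
  set p := P.eval ((x ^ 2)⁻¹)
  set q := Q.eval ((x ^ 2)⁻¹)
  set r := R.eval ((x ^ 2)⁻¹)
  field_simp at key ⊢
  linear_combination x * q ^ 2 * key + q ^ 2 * r ^ 2 * h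
end

section
/- If polynomials P, Q, R in C[z] satisfy R(z)^2 = (1-z)^2 Q(z)^4 - z·P(z)^4, and (x,y) lies on y^2 = x^3 - x with x ≠ 0 and P(x^{-2}) ≠ 0, then X = (x^2-1)·Q(x^{-2})^2/(x·P(x^{-2})^2) and Y = y·Q(x^{-2})·R(x^{-2})/P(x^{-2})^3 satisfy Y^2 = X^3 - X. -/
theorem pqr_even_gives_E1_endomorphism (P Q R : Polynomial ℂ)
    (hPQR : ∀ z : ℂ, (R.eval z) ^ 2 = (1 - z) ^ 2 * (Q.eval z) ^ 4 - z * (P.eval z) ^ 4)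
    (x y : ℂ) (hx : x ≠ 0) (hP : P.eval (x ^ (-2 : ℤ)) ≠ 0)
    (h : y ^ 2 = x ^ 3 - x) :
    (y * Q.eval (x ^ (-2 : ℤ)) * R.eval (x ^ (-2 : ℤ)) / (P.eval (x ^ (-2 : ℤ))) ^ 3) ^ 2 =
      ((x ^ 2 - 1) * (Q.eval (x ^ (-2 : ℤ))) ^ 2 / (x * (P.eval (x ^ (-2 : ℤ))) ^ 2)) ^ 3 -
        (x ^ 2 - 1) * (Q.eval (x ^ (-2 : ℤ))) ^ 2 / (x * (P.eval (x ^ (-2 : ℤ))) ^ 2) := by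
  set z : ℂ := x ^ (-2 : ℤ) with hzdef
  have hzeq : z * x ^ 2 = 1 := by
    rw [hzdef, zpow_neg]
    exact inv_mul_cancel₀ (pow_ne_zero 2 hx)
  have hr := hPQR z
  set p := P.eval z
  set q := Q.eval z
  set r := R.eval z
  have key : r ^ 2 * x ^ 4 = (x ^ 2 - 1) ^ 2 * q ^ 4 - x ^ 2 * p ^ 4 := by
    linear_combination x ^ 4 * hr +
      (q ^ 4 * (-2 * (x ^ 2 - 1) + (z * x ^ 2 - 1)) - x ^ 2 * p ^ 4) * hzeq
  field_simp
  linear_combination q ^ 2 * r ^ 2 * x ^ 3 * h + q ^ 2 * (x ^ 2 - 1) * key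
end

section
/- If polynomials P, Q, R in C[z] satisfy (1-z)R(z)^2 = Q(z)^3 - z·P(z)^6, and (x,y) is a point on y^2 = x^3 - 1 with x ≠ 0 and P(x^{-3}) ≠ 0, then X = x·Q(x^{-3})/P(x^{-3})^2 and Y = y·R(x^{-3})/P(x^{-3})^3 satisfy Y^2 = X^3 - 1. -/
theorem pqr_gives_E2_endomorphism (P Q R : Polynomial ℂ)
    (hPQR : ∀ z : ℂ, (1 - z) * (R.eval z) ^ 2 = (Q.eval z) ^ 3 - z * (P.eval z) ^ 6)
    (x y : ℂ) (hx : x ≠ 0) (hP : P.eval (x ^ (-3 : ℤ)) ≠ 0)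
    (h : y ^ 2 = x ^ 3 - 1) :
    (y * R.eval (x ^ (-3 : ℤ)) / (P.eval (x ^ (-3 : ℤ))) ^ 3) ^ 2 =
      (x * Q.eval (x ^ (-3 : ℤ)) / (P.eval (x ^ (-3 : ℤ))) ^ 2) ^ 3 - 1 := by
  set z : ℂ := x ^ (-3 : ℤ) with hzdef
  have hx3 : x ^ 3 ≠ 0 := pow_ne_zero 3 hx
  have hxz : x ^ 3 * z = 1 := by
    rw [hzdef, zpow_neg, mul_inv_eq_one₀ (by exact_mod_cast hx3)]
    norm_cast
  have key : (x ^ 3 - 1) * (R.eval z) ^ 2 =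
      x ^ 3 * (Q.eval z) ^ 3 - (P.eval z) ^ 6 := by
    linear_combination x ^ 3 * hPQR z + (R.eval z) ^ 2 * hxz - (P.eval z) ^ 6 * hxz
  field_simp
  linear_combination (R.eval z) ^ 2 * h + key
end

section
/- If polynomials P, Q, R in C[z] satisfy z·P(z)^3 + (1-z)·R(z)^3 = Q(z)^3, and (X,Y) is a point on X^3 + Y^3 = 1 with X ≠ 0 and P(X^{-3}) ≠ 0, then the pair (U, V) = (X·Q(X^{-3})/P(X^{-3}), Y·R(X^{-3})/P(X^{-3})) also satisfies U^3 + V^3 = 1. -/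
theorem pqr_gives_E3_endomorphism (P Q R : Polynomial ℂ)
    (hPQR : ∀ z : ℂ, z * (P.eval z) ^ 3 + (1 - z) * (R.eval z) ^ 3 = (Q.eval z) ^ 3)
    (X Y : ℂ) (hX : X ≠ 0) (hP : P.eval (X ^ (-3 : ℤ)) ≠ 0)
    (h : X ^ 3 + Y ^ 3 = 1) :
    (X * Q.eval (X ^ (-3 : ℤ)) / P.eval (X ^ (-3 : ℤ))) ^ 3 +
      (Y * R.eval (X ^ (-3 : ℤ)) / P.eval (X ^ (-3 : ℤ))) ^ 3 = 1 := by
  have hq := hPQR (X ^ (-3 : ℤ))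
  set z : ℂ := X ^ (-3 : ℤ) with hzdef
  have hX3 : X ^ 3 ≠ 0 := pow_ne_zero _ hX
  have hz : z * X ^ 3 = 1 := by
    rw [hzdef, zpow_neg, ← zpow_natCast]
    norm_num
    exact inv_mul_cancel₀ hX3
  have hp3 : (P.eval z) ^ 3 ≠ 0 := pow_ne_zero _ hP
  rw [div_pow, div_pow, ← add_div, div_eq_one_iff_eq hp3]
  linear_combination (-(X ^ 3)) * hq + ((R.eval z) ^ 3) * h +
    ((P.eval z) ^ 3 - (R.eval z) ^ 3) * hz
end

section
/- If polynomials P, Q, R in C[z] satisfy z(z-1)·P(z)^3 = Q(z)^3 + R(z)^3, and (X,Y) lies on X^3 + Y^3 = 1 with XY ≠ 0 and P(X^{-3}) ≠ 0, then U = X^2·Q(X^{-3})/(Y·P(X^{-3})) and V = X^2·R(X^{-3})/(Y·P(X^{-3})) satisfy U^3 + V^3 = 1. -/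
theorem pqr_even_gives_E3_endomorphism (P Q R : Polynomial ℂ)
    (hPQR : ∀ z : ℂ, z * (z - 1) * (P.eval z) ^ 3 = (Q.eval z) ^ 3 + (R.eval z) ^ 3)
    (X Y : ℂ) (hXY : X * Y ≠ 0) (hP : P.eval (X ^ (-3 : ℤ)) ≠ 0)
    (h : X ^ 3 + Y ^ 3 = 1) :
    (X ^ 2 * Q.eval (X ^ (-3 : ℤ)) / (Y * P.eval (X ^ (-3 : ℤ)))) ^ 3 +
      (X ^ 2 * R.eval (X ^ (-3 : ℤ)) / (Y * P.eval (X ^ (-3 : ℤ)))) ^ 3 = 1 := by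
  have hX : X ≠ 0 := fun hx => hXY (by simp [hx])
  have hY : Y ≠ 0 := fun hy => hXY (by simp [hy])
  have hz : X ^ (-3 : ℤ) = (X ^ 3)⁻¹ := by
    rw [zpow_neg, zpow_ofNat]
  have key := hPQR (X ^ (-3 : ℤ))
  rw [hz] at key hP ⊢
  have hX3 : X ^ 3 ≠ 0 := pow_ne_zero _ hX
  set p := P.eval (X ^ 3)⁻¹ with hp
  set q := Q.eval (X ^ 3)⁻¹ with hq
  set r := R.eval (X ^ 3)⁻¹ with hr
  have key2 : X ^ 6 * (q ^ 3 + r ^ 3) = Y ^ 3 * p ^ 3 := by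
    field_simp at key
    linear_combination (-1 : ℂ) * key - p ^ 3 * h
  have hden : Y * p ≠ 0 := mul_ne_zero hY hP
  rw [div_pow, div_pow, ← add_div, div_eq_one_iff_eq (pow_ne_zero 3 hden)]
  linear_combination key2
end

section
/- If P, Q, R are polynomials satisfying (1-z)R^2 = Q^3 - z·P^6, then the triple (2PR, Q(Q^3 + 8zP^6), Q^6 - 20zP^6Q^3 - 8z^2P^12) satisfies the even-degree identity: (Q^6 - 20zP^6Q^3 - 8z^2P^{12})^2 = (Q(Q^3+8zP^6))^3 - z(1-z)^3·(2PR)^6. -/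
theorem duplication_formula_E2 (P Q R : Polynomial ℂ)
    (h : ∀ z : ℂ, (1 - z) * (R.eval z) ^ 2 = (Q.eval z) ^ 3 - z * (P.eval z) ^ 6) :
    ∀ z : ℂ,
      ((Q.eval z) ^ 6 - 20 * z * (P.eval z) ^ 6 * (Q.eval z) ^ 3 -
          8 * z ^ 2 * (P.eval z) ^ 12) ^ 2 =
        (Q.eval z * ((Q.eval z) ^ 3 + 8 * z * (P.eval z) ^ 6)) ^ 3 -
          z * (1 - z) ^ 3 * (2 * P.eval z * R.eval z) ^ 6 := by
  intro z
  linear_combination (64 * z * (P.eval z)^6 *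
    ((1-z)^2*(R.eval z)^4 + (1-z)*(R.eval z)^2*((Q.eval z)^3 - z*(P.eval z)^6)
      + ((Q.eval z)^3 - z*(P.eval z)^6)^2)) * h z
end
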